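/- Assume that for every integer m ≥ 4 and every graph G with χ(G) ≥ m, if u, v are nonadjacent vertices such that every proper coloring of G with χ(G) colors assigns u and v different colors, then G contains a 3-connected subgraph with chromatic number at least m. Then for every m ≥ 4, every graph with chromatic number at least m + 1 contains a 3-connected subgraph with chromatic number at least m (i.e., g(2,m) = m + 1). -/

import Mathlib

/-- `G` is `n`-connected: it has more than `n` vertices and no cutset of fewer than `n`
vertices. -/
def KConnected {V : Type*} (G : SimpleGraph V) (n : ℕ) : Prop :=
  n < Nat.card V ∧ ∀ X : Set V, X.ncard < n →
    ¬ ∃ A B : Set V, A.Nonempty ∧ B.Nonempty ∧ Disjoint A B ∧ A ∪ B = Xᶜ ∧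
        ∀ a ∈ A, ∀ b ∈ B, ¬ G.Adj a b

open SimpleGraph Set

section Aux

variable {V W : Type*} {G : SimpleGraph V} {G' : SimpleGraph W}

lemma KConnected.of_iso (e : G ≃g G') {n : ℕ} (h : KConnected G n) : KConnected G' n := by
  obtain ⟨hcard, hsep⟩ := h
  refine ⟨by rwa [← Nat.card_congr e.toEquiv], ?_⟩
  rintro X hX ⟨A, B, hA, hB, hAB, hU, hadj⟩
  have hinj : Function.Injective (⇑(e.symm)) := e.symm.injective
  refine hsep (⇑e.symm '' X) (by rwa [Set.ncard_image_of_injective _ hinj])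
    ⟨⇑e.symm '' A, ⇑e.symm '' B, hA.image _, hB.image _,
      (Set.disjoint_image_iff hinj).mpr hAB, ?_, ?_⟩
  · rw [← Set.image_union, hU, Set.image_compl_eq e.symm.bijective]
  · rintro _ ⟨a, ha, rfl⟩ _ ⟨b, hb, rfl⟩ had
    exact hadj a ha b hb (e.symm.map_adj_iff.mp had)

lemma chromaticNumber_congr (e : G ≃g G') : G.chromaticNumber = G'.chromaticNumber :=
  le_antisymm (chromaticNumber_mono_of_hom e.toEmbedding.toHom)
    (chromaticNumber_mono_of_hom e.symm.toEmbedding.toHom)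

/-- The coe of a mapped subgraph is isomorphic to the coe of the original. -/
noncomputable def mapIso (f : G ↪g G') (H : G.Subgraph) : H.coe ≃g (H.map f.toHom).coe where
  toEquiv := Equiv.Set.image (⇑f) H.verts f.injective
  map_rel_iff' := by
    intro a b
    simp only [Equiv.Set.image_apply, Subgraph.coe_adj, Subgraph.map_adj]
    constructor
    · rintro ⟨u, v, huv, hu, hv⟩
      have hu' : u = (a : V) := f.injective hu
      have hv' : v = (b : V) := f.injective hv
      subst hu'; subst hv'; exact huv
    · intro h
      exact ⟨a, b, h, rfl, rfl⟩

lemma transfer {S : Set V} {m : ℕ}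
    (h : ∃ H : (G.induce S).Subgraph,
      KConnected H.coe 3 ∧ (m : ℕ∞) ≤ H.coe.chromaticNumber) :
    ∃ H : G.Subgraph, KConnected H.coe 3 ∧ (m : ℕ∞) ≤ H.coe.chromaticNumber := by
  obtain ⟨H, h3, hc⟩ := h
  refine ⟨H.map (SimpleGraph.Embedding.induce S).toHom, ?_, ?_⟩
  · exact h3.of_iso (mapIso (SimpleGraph.Embedding.induce S) H)
  · rw [← _root_.chromaticNumber_congr (mapIso (SimpleGraph.Embedding.induce S) H)]
    exact hc

/-- Recolor by a permutation. -/
def recolor {m : ℕ} (σ : Equiv.Perm (Fin m)) (C : G.Coloring (Fin m)) :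
    G.Coloring (Fin m) :=
  Coloring.mk (fun z => σ (C z)) (fun h hc => C.valid h (σ.injective hc))

lemma exists_perm {m : ℕ} (a b c d : Fin m) (h : a = b ↔ c = d) :
    ∃ σ : Equiv.Perm (Fin m), σ c = a ∧ σ d = b := by
  by_cases hcd : c = d
  · subst hcd
    refine ⟨Equiv.swap a c, Equiv.swap_apply_right a c, ?_⟩
    rw [Equiv.swap_apply_right, h.mpr rfl]
  · have hab : a ≠ b := fun hh => hcd (h.mp hh)
    have hea : a ≠ (Equiv.swap a c) d := by
      intro hh
      apply hcd
      apply (Equiv.swap a c).injective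
      rw [Equiv.swap_apply_right]
      exact hh
    refine ⟨(Equiv.swap a c).trans (Equiv.swap b ((Equiv.swap a c) d)), ?_, ?_⟩
    · simp only [Equiv.trans_apply, Equiv.swap_apply_right]
      exact Equiv.swap_apply_of_ne_of_ne hab hea
    · simp only [Equiv.trans_apply, Equiv.swap_apply_right]

lemma combine {m : ℕ} {X A B : Set V}
    (hU : A ∪ B = Xᶜ) (hd : Disjoint A B)
    (hne : ∀ a ∈ A, ∀ b ∈ B, ¬ G.Adj a b)
    (C1 : (G.induce (A ∪ X)).Coloring (Fin m))
    (C2 : (G.induce (B ∪ X)).Coloring (Fin m))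
    (hag : ∀ z (hz : z ∈ X), C1 ⟨z, Or.inr hz⟩ = C2 ⟨z, Or.inr hz⟩) :
    G.Colorable m := by
  classical
  have hmem : ∀ z : V, z ∉ A ∪ X → z ∈ B := by
    intro z hz
    by_cases hzX : z ∈ X
    · exact absurd (Or.inr hzX) hz
    · have hz' : z ∈ A ∪ B := by rw [hU]; exact hzX
      rcases hz' with h | h
      · exact absurd (Or.inl h) hz
      · exact h
  refine ⟨Coloring.mk
    (fun z => if h : z ∈ A ∪ X then C1 ⟨z, h⟩ else C2 ⟨z, Or.inl (hmem z h)⟩) ?_⟩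
  intro a b hab
  by_cases ha : a ∈ A ∪ X <;> by_cases hb : b ∈ A ∪ X
  · simp only [dif_pos ha, dif_pos hb]
    exact C1.valid hab
  · have hbB : b ∈ B := hmem b hb
    have haX : a ∈ X := by
      rcases ha with h | h
      · exact absurd hab (hne a h b hbB)
      · exact h
    simp only [dif_pos ha, dif_neg hb]
    have h1 : C1 ⟨a, ha⟩ = C2 ⟨a, Or.inr haX⟩ := hag a haX
    rw [h1]
    exact C2.valid hab
  · have haB : a ∈ B := hmem a ha
    have hbX : b ∈ X := by
      rcases hb with h | h
      · exact absurd (G.adj_symm hab) (hne b h a haB)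
      · exact h
    simp only [dif_pos hb, dif_neg ha]
    have h1 : C1 ⟨b, hb⟩ = C2 ⟨b, Or.inr hbX⟩ := hag b hbX
    rw [h1]
    exact C2.valid hab
  · simp only [dif_neg ha, dif_neg hb]
    exact C2.valid hab

end Aux

/-- The auxiliary merged coloring function. -/
def mergeFun {m : ℕ} (hm1 : m - 1 < m) {S : Type*} [DecidableEq S] (x y : S)
    (D : S → Fin (m - 1)) : S → Fin m :=
  fun z => if z = x ∨ z = y then ⟨m - 1, hm1⟩ else ⟨(D z : ℕ), lt_trans (D z).2 hm1⟩

section Side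

/-- The "only different colors" side case, applying the hypothesis. -/
lemma side_case
    (hyp : ∀ (V : Type) (_ : Fintype V) (G : SimpleGraph V) (m : ℕ), 4 ≤ m →
      ((m : ℕ∞) ≤ G.chromaticNumber) →
      ∀ u v : V, u ≠ v → ¬ G.Adj u v →
        (∀ f : V → ℕ, (∀ ⦃a b⦄, G.Adj a b → f a ≠ f b) →
          (∀ x, ((f x : ℕ∞) < G.chromaticNumber)) → f u ≠ f v) →
        ∃ H : G.Subgraph, KConnected H.coe 3 ∧ (m : ℕ∞) ≤ H.coe.chromaticNumber)
    {V : Type} [Fintype V] (G : SimpleGraph V) (m : ℕ) (hm : 4 ≤ m)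
    (S : Set V) (x y : V) (hx : x ∈ S) (hy : y ∈ S) (hxy : x ≠ y)
    (hnadj : ¬ G.Adj x y) (hcol : (G.induce S).Colorable m)
    (hD : ∀ D : (G.induce S).Coloring (Fin m), D ⟨x, hx⟩ ≠ D ⟨y, hy⟩) :
    ∃ H : G.Subgraph, KConnected H.coe 3 ∧ (m : ℕ∞) ≤ H.coe.chromaticNumber := by
  classical
  have hm1 : m - 1 < m := by omega
  have hnc : ¬ (G.induce S).Colorable (m - 1) := by
    rintro ⟨D⟩
    have hvalid : ∀ {u v : ↥S}, (G.induce S).Adj u v →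
        mergeFun hm1 (⟨x, hx⟩ : ↥S) ⟨y, hy⟩ (⇑D) u ≠
        mergeFun hm1 (⟨x, hx⟩ : ↥S) ⟨y, hy⟩ (⇑D) v := by
      intro u v huv
      unfold mergeFun
      by_cases hu : u = ⟨x, hx⟩ ∨ u = ⟨y, hy⟩ <;>
        by_cases hv : v = ⟨x, hx⟩ ∨ v = ⟨y, hy⟩
      · exfalso
        have hne : u ≠ v := huv.ne
        rcases hu with rfl | rfl <;> rcases hv with rfl | rfl
        · exact hne rfl
        · exact hnadj huv
        · exact hnadj (G.adj_symm huv)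
        · exact hne rfl
      · rw [if_pos hu, if_neg hv]
        intro hh
        simp only [Fin.mk.injEq] at hh
        have := (D v).2
        omega
      · rw [if_neg hu, if_pos hv]
        intro hh
        simp only [Fin.mk.injEq] at hh
        have := (D u).2
        omega
      · rw [if_neg hu, if_neg hv]
        intro hh
        simp only [Fin.mk.injEq] at hh
        exact D.valid huv (Fin.val_injective hh)
    refine hD (Coloring.mk _ hvalid) ?_
    show mergeFun hm1 (⟨x, hx⟩ : ↥S) ⟨y, hy⟩ (⇑D) ⟨x, hx⟩ =
      mergeFun hm1 (⟨x, hx⟩ : ↥S) ⟨y, hy⟩ (⇑D) ⟨y, hy⟩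
    unfold mergeFun
    rw [if_pos (Or.inl rfl), if_pos (Or.inr rfl)]
  have hle : (G.induce S).chromaticNumber ≤ (m : ℕ∞) := hcol.chromaticNumber_le
  have hge : (m : ℕ∞) ≤ (G.induce S).chromaticNumber := by
    have h1 : ((m - 1 : ℕ) : ℕ∞) < (G.induce S).chromaticNumber :=
      lt_of_not_ge fun hh => hnc (chromaticNumber_le_iff_colorable.mp hh)
    have h2 := (ENat.add_one_le_iff (by simp)).mpr h1
    have h3 : ((m - 1 : ℕ) : ℕ∞) + 1 = (m : ℕ∞) := by
      have h4 : m - 1 + 1 = m := by omega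
      exact_mod_cast congrArg (Nat.cast : ℕ → ℕ∞) h4
    rwa [h3] at h2
  have hEq : (G.induce S).chromaticNumber = (m : ℕ∞) := le_antisymm hle hge
  haveI : Fintype ↥S := S.toFinite.fintype
  have hcond : ∀ f : ↥S → ℕ, (∀ ⦃a b⦄, (G.induce S).Adj a b → f a ≠ f b) →
      (∀ z, ((f z : ℕ∞) < (G.induce S).chromaticNumber)) → f ⟨x, hx⟩ ≠ f ⟨y, hy⟩ := by
    intro f hf hflt heq
    have hlt : ∀ z, f z < m := by
      intro z
      have := hflt z
      rw [hEq] at this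
      exact_mod_cast this
    exact hD (Coloring.mk (fun z => ⟨f z, hlt z⟩)
      (fun h hc => hf h (congrArg Fin.val hc))) (Fin.ext heq)
  obtain ⟨H, h3, hχH⟩ := hyp ↥S inferInstance (G.induce S) m hm hge
    ⟨x, hx⟩ ⟨y, hy⟩ (fun hh => hxy (congrArg Subtype.val hh)) hnadj hcond
  exact transfer ⟨H, h3, hχH⟩

end Side

/-- Assume that for every `m ≥ 4` and every graph `G` with `χ(G) ≥ m`, whenever `u, v`
are distinct nonadjacent vertices such that every optimal (proper, `χ(G)`-color)
coloring of `G` assigns `u` and `v` different colors, `G` contains a `3`-connected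
subgraph with chromatic number at least `m`.  Then for every `m ≥ 4`, every graph with
chromatic number at least `m + 1` contains a `3`-connected subgraph with chromatic
number at least `m` (that is, `g(2, m) = m + 1`). -/
theorem g_two_eq_of_conjecture
    (hyp : ∀ (V : Type) (_ : Fintype V) (G : SimpleGraph V) (m : ℕ), 4 ≤ m →
      ((m : ℕ∞) ≤ G.chromaticNumber) →
      ∀ u v : V, u ≠ v → ¬ G.Adj u v →
        (∀ f : V → ℕ, (∀ ⦃a b⦄, G.Adj a b → f a ≠ f b) →
          (∀ x, ((f x : ℕ∞) < G.chromaticNumber)) → f u ≠ f v) →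
        ∃ H : G.Subgraph, KConnected H.coe 3 ∧ (m : ℕ∞) ≤ H.coe.chromaticNumber) :
    ∀ (V : Type) (_ : Fintype V) (G : SimpleGraph V) (m : ℕ), 4 ≤ m →
      ((m : ℕ∞) + 1 ≤ G.chromaticNumber) →
      ∃ H : G.Subgraph, KConnected H.coe 3 ∧ (m : ℕ∞) ≤ H.coe.chromaticNumber := by
  classical
  suffices h : ∀ n : ℕ, ∀ (V : Type) (inst : Fintype V) (G : SimpleGraph V),
      Nat.card V ≤ n → ∀ m : ℕ, 4 ≤ m → ((m : ℕ∞) + 1 ≤ G.chromaticNumber) →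
      ∃ H : G.Subgraph, KConnected H.coe 3 ∧ (m : ℕ∞) ≤ H.coe.chromaticNumber by
    intro V inst G m hm hχ
    exact h (Nat.card V) V inst G le_rfl m hm hχ
  intro n
  induction n using Nat.strong_induction_on with
  | _ n IH =>
    intro V inst G hcard m hm hχ
    by_cases hK : KConnected G 3
    · refine ⟨⊤, hK.of_iso Subgraph.topIso.symm, ?_⟩
      rw [_root_.chromaticNumber_congr Subgraph.topIso]
      exact le_trans le_self_add hχ
    · have hColV : G.chromaticNumber ≤ (Fintype.card V : ℕ∞) :=
        G.colorable_of_fintype.chromaticNumber_le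
      rcases not_and_or.mp hK with hsmall | hcut
      · exfalso
        push_neg at hsmall
        have h2 : ((m + 1 : ℕ) : ℕ∞) ≤ ((Fintype.card V : ℕ) : ℕ∞) :=
          le_trans (by push_cast; exact hχ) hColV
        have h3 : m + 1 ≤ Fintype.card V := by exact_mod_cast h2
        have h4 : Nat.card V = Fintype.card V := Nat.card_eq_fintype_card
        omega
      · push_neg at hcut
        obtain ⟨X, hX, A, B, hA, hB, hdisj, hU, hne⟩ := hcut
        have hAX : A ⊆ Xᶜ := hU ▸ Set.subset_union_left
        have hBX : B ⊆ Xᶜ := hU ▸ Set.subset_union_right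
        have hcard1 : Nat.card ↥(A ∪ X) < n := by
          obtain ⟨b, hb⟩ := hB
          have hbn : b ∉ A ∪ X := by
            rintro (h | h)
            · exact (Set.disjoint_left.mp hdisj h) hb
            · exact hBX hb h
          calc Nat.card ↥(A ∪ X) = (A ∪ X).ncard := Nat.card_coe_set_eq _
            _ < (Set.univ : Set V).ncard := Set.ncard_lt_ncard
                (Set.ssubset_univ_iff.mpr fun hh => hbn (hh.symm ▸ Set.mem_univ b))
                (Set.toFinite _)
            _ = Nat.card V := Set.ncard_univ V
            _ ≤ n := hcard
        have hcard2 : Nat.card ↥(B ∪ X) < n := by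
          obtain ⟨a, ha⟩ := hA
          have han : a ∉ B ∪ X := by
            rintro (h | h)
            · exact (Set.disjoint_left.mp hdisj ha) h
            · exact hAX ha h
          calc Nat.card ↥(B ∪ X) = (B ∪ X).ncard := Nat.card_coe_set_eq _
            _ < (Set.univ : Set V).ncard := Set.ncard_lt_ncard
                (Set.ssubset_univ_iff.mpr fun hh => han (hh.symm ▸ Set.mem_univ a))
                (Set.toFinite _)
            _ = Nat.card V := Set.ncard_univ V
            _ ≤ n := hcard
        haveI : Fintype ↥(A ∪ X) := (A ∪ X).toFinite.fintype
        haveI : Fintype ↥(B ∪ X) := (B ∪ X).toFinite.fintype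
        by_cases h1 : (G.induce (A ∪ X)).Colorable m
        swap
        · refine transfer (IH _ hcard1 ↥(A ∪ X) inferInstance (G.induce (A ∪ X))
            le_rfl m hm ?_)
          have hlt : (m : ℕ∞) < (G.induce (A ∪ X)).chromaticNumber :=
            lt_of_not_ge fun hh => h1 (chromaticNumber_le_iff_colorable.mp hh)
          exact (ENat.add_one_le_iff (by simp)).mpr hlt
        by_cases h2 : (G.induce (B ∪ X)).Colorable m
        swap
        · refine transfer (IH _ hcard2 ↥(B ∪ X) inferInstance (G.induce (B ∪ X))
            le_rfl m hm ?_)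
          have hlt : (m : ℕ∞) < (G.induce (B ∪ X)).chromaticNumber :=
            lt_of_not_ge fun hh => h2 (chromaticNumber_le_iff_colorable.mp hh)
          exact (ENat.add_one_le_iff (by simp)).mpr hlt
        obtain ⟨C1⟩ := h1
        obtain ⟨C2⟩ := h2
        have htop : ¬ G.Colorable m := by
          intro hc
          have h5 := le_trans hχ hc.chromaticNumber_le
          have h6 : ((m + 1 : ℕ) : ℕ∞) ≤ ((m : ℕ) : ℕ∞) := by push_cast; exact h5
          have h7 := (Nat.cast_le (α := ℕ∞)).mp h6
          omega
        have hX2 : X.ncard = 0 ∨ X.ncard = 1 ∨ X.ncard = 2 := by omega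
        rcases hX2 with h0 | h1' | h2'
        · rw [Set.ncard_eq_zero (Set.toFinite X)] at h0
          subst h0
          exact absurd (combine hU hdisj hne C1 C2
            (fun z hz => absurd hz (Set.notMem_empty z))) htop
        · obtain ⟨x, rfl⟩ := Set.ncard_eq_one.mp h1'
          have hx1 : x ∈ A ∪ {x} := Or.inr rfl
          have hx2 : x ∈ B ∪ {x} := Or.inr rfl
          refine absurd (combine hU hdisj hne C1
            (recolor (Equiv.swap (C2 ⟨x, hx2⟩) (C1 ⟨x, hx1⟩)) C2) ?_) htop
          intro z hz
          rw [Set.mem_singleton_iff] at hz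
          subst hz
          exact (Equiv.swap_apply_left (C2 ⟨z, hx2⟩) (C1 ⟨z, hx1⟩)).symm
        · obtain ⟨x, y, hxyne, rfl⟩ := Set.ncard_eq_two.mp h2'
          have hxX : x ∈ ({x, y} : Set V) := Set.mem_insert x {y}
          have hyX : y ∈ ({x, y} : Set V) := Set.mem_insert_of_mem x rfl
          have key : ∀ (D1 : (G.induce (A ∪ {x, y})).Coloring (Fin m))
              (D2 : (G.induce (B ∪ {x, y})).Coloring (Fin m)),
              (D1 ⟨x, Or.inr hxX⟩ = D1 ⟨y, Or.inr hyX⟩ ↔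
               D2 ⟨x, Or.inr hxX⟩ = D2 ⟨y, Or.inr hyX⟩) → False := by
            intro D1 D2 hiff
            obtain ⟨σ, hσ1, hσ2⟩ := exists_perm _ _ _ _ hiff
            refine htop (combine hU hdisj hne D1 (recolor σ D2) ?_)
            intro z hz
            rcases hz with rfl | hz
            · exact hσ1.symm
            · rw [Set.mem_singleton_iff] at hz
              subst hz
              exact hσ2.symm
          by_cases hadjxy : G.Adj x y
          · exact (key C1 C2 (iff_of_false (C1.valid hadjxy) (C2.valid hadjxy))).elim
          · by_cases hc1 : C1 ⟨x, Or.inr hxX⟩ = C1 ⟨y, Or.inr hyX⟩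
            · refine side_case hyp G m hm (B ∪ {x, y}) x y (Or.inr hxX) (Or.inr hyX)
                hxyne hadjxy ⟨C2⟩ ?_
              intro D hDe
              exact key C1 D (iff_of_true hc1 hDe)
            · by_cases hc2 : C2 ⟨x, Or.inr hxX⟩ = C2 ⟨y, Or.inr hyX⟩
              · refine side_case hyp G m hm (A ∪ {x, y}) x y (Or.inr hxX) (Or.inr hyX)
                  hxyne hadjxy ⟨C1⟩ ?_
                intro D hDe
                exact key D C2 (iff_of_true hDe hc2)
              · exact (key C1 C2 (iff_of_false hc1 hc2)).elim
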